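/- Let n > d be positive integers, m > 1 an integer, and let A be a d × n integer matrix with first row (a₁₁, m·a₁₂, …, m·a₁ₙ) and i-th row (a_{i1}, …, a_{in}) for 2 ≤ i ≤ d, satisfying gcd(a₁₁, m) = 1, such that both A and the matrix with first row (1, a₁₂, …, a₁ₙ), first column below equal to 0, and remaining entries a_{ij}, determine surjections ℤⁿ → ℤ^d. Let B be an n × (n−d) integer matrix with first row (m·b₁₁, m·b₁₂, …, m·b_{1,n−d}) and i-th row (b_{i1}, …, b_{i,n−d}) for 2 ≤ i ≤ n, such that the sequence 0 → ℤ^{n−d} →B ℤⁿ →A ℤ^d → 0 is exact. Let A′ be the (d+m−1) × (n+m−1) matrix with row 1 = (a₁₁, 0, …, 0, a₁₂, …, a₁ₙ), rows i = (a_{i1} repeated m times, a_{i2}, …, a_{in}) for 2 ≤ i ≤ d, and rows d+k (1 ≤ k ≤ m−1) having 1 in column k, −1 in column k+1, and 0 elsewhere. Let B′ be the (n+m−1) × (n−d) matrix whose first m rows all equal (b₁₁, b₁₂, …, b_{1,n−d}) and whose remaining rows are rows 2 through n of B. Then the sequence 0 → ℤ^{n−d} →B′ ℤ^{n+m−1}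 →A′ ℤ^{d+m−1} → 0 is exact. -/

import Mathlib

set_option maxHeartbeats 4000000

def extz {k : ℕ} (x : Fin k → ℤ) : ℕ → ℤ := fun j => if h : j < k then x ⟨j, h⟩ else 0

lemma extz_coe {k : ℕ} (x : Fin k → ℤ) (j : Fin k) : extz x (j : ℕ) = x j := by
  simp [extz, j.isLt]

lemma extz_lt {k : ℕ} (x : Fin k → ℤ) {j : ℕ} (h : j < k) : extz x j = x ⟨j, h⟩ := dif_pos h

lemma extz_sub {k : ℕ} (x y : Fin k → ℤ) (j : ℕ) : extz (x - y) j = extz x j - extz y j := by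
  unfold extz; split <;> simp

lemma mulVec_range {p q : ℕ} (M : Matrix (Fin p) (Fin q) ℤ) (v : Fin q → ℤ) (i : Fin p) :
    M.mulVec v i = ∑ j ∈ Finset.range q, extz (M i) j * extz v j := by
  rw [← Fin.sum_univ_eq_sum_range]
  simp [Matrix.mulVec, dotProduct, extz_coe]

lemma sum_split (m n : ℕ) (hm : 1 ≤ m) (hn : 1 ≤ n) (F : ℕ → ℤ) :
    ∑ j ∈ Finset.range (n + m - 1), F j
      = ∑ j ∈ Finset.range m, F j + ∑ j ∈ Finset.Ico 1 n, F (j + m - 1) := by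
  rw [Finset.range_eq_Ico, ← Finset.sum_Ico_consecutive F (Nat.zero_le m) (by omega : m ≤ n+m-1),
    ← Finset.range_eq_Ico]
  congr 1
  rw [Finset.sum_Ico_eq_sum_range, Finset.sum_Ico_eq_sum_range]
  have h : n + m - 1 - m = n - 1 := by omega
  rw [h]
  apply Finset.sum_congr rfl
  intro k hk
  congr 1
  omega

lemma sum_head (n : ℕ) (hn : 1 ≤ n) (F : ℕ → ℤ) :
    ∑ j ∈ Finset.range n, F j = F 0 + ∑ j ∈ Finset.Ico 1 n, F j := by
  rw [Finset.range_eq_Ico, Finset.sum_eq_sum_Ico_succ_bot hn F]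


/-- **Lemma 7.** With `A`, `A'` the matrices of Lemma 6 and `B`, `B'` the corresponding
enlarged kernel matrices (the non-primitive first row `m·(b₁₁,…,b₁,ₙ₋d)` of `B` being broken
into `m` copies of `(b₁₁,…,b₁,ₙ₋d)` in `B'`), exactness of
`0 → ℤ^{n-d} →B ℤⁿ →A ℤ^d → 0` implies exactness of
`0 → ℤ^{n-d} →B' ℤ^{n+m-1} →A' ℤ^{d+m-1} → 0`. -/
theorem stmt_9 (d n m : ℕ) (hd : 0 < d) (hdn : d < n) (hm : 1 < m)
    (a : Matrix (Fin d) (Fin n) ℤ)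
    (A : Matrix (Fin d) (Fin n) ℤ)
    (hA : ∀ (i : Fin d) (j : Fin n),
      A i j = if (i : ℕ) = 0 ∧ (j : ℕ) ≠ 0 then (m : ℤ) * a i j else a i j)
    (hgcd : Int.gcd (a ⟨0, hd⟩ ⟨0, by omega⟩) (m : ℤ) = 1)
    (hAsurj : Function.Surjective A.mulVec)
    (hA1surj : Function.Surjective (Matrix.mulVec (fun (i : Fin d) (j : Fin n) =>
      if (j : ℕ) = 0 then (if (i : ℕ) = 0 then 1 else 0) else a i j)))
    (b₁ : Fin (n - d) → ℤ)
    (B : Matrix (Fin n) (Fin (n - d)) ℤ)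
    (hB0 : ∀ j : Fin (n - d), B ⟨0, by omega⟩ j = (m : ℤ) * b₁ j)
    (hBinj : Function.Injective B.mulVec)
    (hexact : ∀ v : Fin n → ℤ, A.mulVec v = 0 ↔ ∃ u, B.mulVec u = v)
    (A' : Matrix (Fin (d + m - 1)) (Fin (n + m - 1)) ℤ)
    (hA' : ∀ (i : Fin (d + m - 1)) (j : Fin (n + m - 1)),
      A' i j =
        if hi : (i : ℕ) < d then
          if (j : ℕ) < m then
            (if (i : ℕ) = 0 then
              (if (j : ℕ) = 0 then a ⟨(i : ℕ), hi⟩ ⟨0, by omega⟩ else 0)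
            else a ⟨(i : ℕ), hi⟩ ⟨0, by omega⟩)
          else a ⟨(i : ℕ), hi⟩ ⟨(j : ℕ) - m + 1, by have := j.isLt; omega⟩
        else
          if (j : ℕ) = (i : ℕ) - d then 1
          else if (j : ℕ) = (i : ℕ) - d + 1 then -1 else 0)
    (B' : Matrix (Fin (n + m - 1)) (Fin (n - d)) ℤ)
    (hB' : ∀ (i : Fin (n + m - 1)) (j : Fin (n - d)),
      B' i j = if (i : ℕ) < m then b₁ j
        else B ⟨(i : ℕ) - m + 1, by have := i.isLt; omega⟩ j) :
    Function.Injective B'.mulVec ∧ Function.Surjective A'.mulVec ∧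
      ∀ v : Fin (n + m - 1) → ℤ, A'.mulVec v = 0 ↔ ∃ u, B'.mulVec u = v := by
    classical
  have hm0 : (m : ℤ) ≠ 0 := by exact_mod_cast (by omega : m ≠ 0)
  have hn0 : 0 < n := by omega
  have hmpos : 0 < m := by omega
  -- row computations
  have cA' : ∀ (v : Fin (n + m - 1) → ℤ) (i : ℕ) (hi : i < d),
      A'.mulVec v ⟨i, by omega⟩ =
        (if i = 0 then extz (a ⟨i, hi⟩) 0 * extz v 0
          else extz (a ⟨i, hi⟩) 0 * ∑ k ∈ Finset.range m, extz v k)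
        + ∑ j ∈ Finset.Ico 1 n, extz (a ⟨i, hi⟩) j * extz v (j + m - 1) := by
    intro v i hi
    rw [mulVec_range, sum_split m n (by omega) (by omega)]
    congr 1
    · have hrow : ∀ j, j < m → extz (A' ⟨i, by omega⟩) j
          = if i = 0 then (if j = 0 then extz (a ⟨i, hi⟩) 0 else 0)
            else extz (a ⟨i, hi⟩) 0 := by
        intro j hj
        have hjN : j < n + m - 1 := by omega
        rw [extz_lt _ hjN, hA']
        rw [dif_pos (show ((⟨i, by omega⟩ : Fin (d + m - 1)) : ℕ) < d from hi)]
        rw [if_pos (show ((⟨j, hjN⟩ : Fin (n + m - 1)) : ℕ) < m from hj)]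
        rw [extz_lt (a ⟨i, hi⟩) (show 0 < n by omega)]
      by_cases h0 : i = 0
      · rw [if_pos h0]
        have step : ∑ j ∈ Finset.range m, extz (A' ⟨i, by omega⟩) j * extz v j
            = ∑ j ∈ Finset.range m,
                (if j = 0 then extz (a ⟨i, hi⟩) 0 * extz v j else 0) := by
          apply Finset.sum_congr rfl
          intro j hj
          rw [hrow j (Finset.mem_range.mp hj), if_pos h0]
          by_cases hj0 : j = 0 <;> simp [hj0]
        rw [step, Finset.sum_ite_eq' (Finset.range m) 0
          (fun j => extz (a ⟨i, hi⟩) 0 * extz v j)]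
        rw [if_pos (Finset.mem_range.mpr (by omega))]
      · rw [if_neg h0, Finset.mul_sum]
        apply Finset.sum_congr rfl
        intro j hj
        rw [hrow j (Finset.mem_range.mp hj), if_neg h0]
    · apply Finset.sum_congr rfl
      intro j hj
      obtain ⟨hj1, hj2⟩ := Finset.mem_Ico.mp hj
      have hjN : j + m - 1 < n + m - 1 := by omega
      rw [extz_lt _ hjN, hA']
      rw [dif_pos (show ((⟨i, by omega⟩ : Fin (d + m - 1)) : ℕ) < d from hi)]
      rw [if_neg (show ¬ (j + m - 1 < m) from by omega)]
      conv_rhs => rw [extz_lt (a ⟨i, hi⟩) hj2]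
      congr 1
      exact congrArg _ (Fin.ext (by simp; omega))
  have cA'ge : ∀ (v : Fin (n + m - 1) → ℤ) (i : ℕ) (hi1 : d ≤ i) (hi2 : i < d + m - 1),
      A'.mulVec v ⟨i, hi2⟩ = extz v (i - d) - extz v (i - d + 1) := by
    intro v i hi1 hi2
    rw [mulVec_range]
    have hrow : ∀ j : ℕ, j < n + m - 1 → extz (A' ⟨i, hi2⟩) j
        = (if j = i - d then 1 else 0) + (if j = i - d + 1 then -1 else 0) := by
      intro j hj
      rw [extz_lt _ hj, hA']
      rw [dif_neg (by simpa using by omega : ¬ ((⟨i, hi2⟩ : Fin (d + m - 1)) : ℕ) < d)]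
      by_cases hp : j = i - d
      · have hq : j ≠ i - d + 1 := by omega
        simp [hp, hq]
      · by_cases hq : j = i - d + 1 <;> simp [hp, hq]
    have step : ∑ j ∈ Finset.range (n + m - 1), extz (A' ⟨i, hi2⟩) j * extz v j
        = ∑ j ∈ Finset.range (n + m - 1),
            ((if j = i - d then extz v j else 0) + (if j = i - d + 1 then -extz v j else 0)) := by
      apply Finset.sum_congr rfl
      intro j hj
      rw [hrow j (Finset.mem_range.mp hj)]
      by_cases hp : j = i - d
      · have hq : j ≠ i - d + 1 := by omega
        simp [hp, hq]
      · by_cases hq : j = i - d + 1 <;> simp [hp, hq]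
    rw [step, Finset.sum_add_distrib,
      Finset.sum_ite_eq' (Finset.range (n + m - 1)) (i - d) (fun j => extz v j),
      Finset.sum_ite_eq' (Finset.range (n + m - 1)) (i - d + 1) (fun j => -extz v j)]
    rw [if_pos (Finset.mem_range.mpr (by omega)), if_pos (Finset.mem_range.mpr (by omega))]
    ring
  have cA : ∀ (w : Fin n → ℤ) (i : ℕ) (hi : i < d),
      A.mulVec w ⟨i, hi⟩ = extz (a ⟨i, hi⟩) 0 * extz w 0
        + ∑ j ∈ Finset.Ico 1 n,
            (if i = 0 then (m : ℤ) * extz (a ⟨i, hi⟩) j else extz (a ⟨i, hi⟩) j) * extz w j := by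
    intro w i hi
    rw [mulVec_range, sum_head n (by omega)]
    congr 1
    · rw [extz_lt (A ⟨i, hi⟩) (by omega : 0 < n), hA,
        extz_lt (a ⟨i, hi⟩) (by omega : 0 < n)]
      simp
    · apply Finset.sum_congr rfl
      intro j hj
      obtain ⟨hj1, hj2⟩ := Finset.mem_Ico.mp hj
      rw [extz_lt (A ⟨i, hi⟩) hj2, hA, extz_lt (a ⟨i, hi⟩) hj2]
      have hj0 : j ≠ 0 := by omega
      by_cases h0 : i = 0 <;> simp [h0, hj0]
  have cA1 : ∀ (w : Fin n → ℤ) (i : ℕ) (hi : i < d),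
      Matrix.mulVec (fun (i : Fin d) (j : Fin n) =>
          if (j : ℕ) = 0 then (if (i : ℕ) = 0 then 1 else 0) else a i j) w ⟨i, hi⟩
        = (if i = 0 then (1:ℤ) else 0) * extz w 0
          + ∑ j ∈ Finset.Ico 1 n, extz (a ⟨i, hi⟩) j * extz w j := by
    intro w i hi
    refine (mulVec_range _ w ⟨i, hi⟩).trans ?_
    rw [sum_head n (by omega)]
    congr 1
    · rw [extz_lt _ (by omega : 0 < n)]
      by_cases h0 : i = 0 <;> simp [h0]
    · apply Finset.sum_congr rfl
      intro j hj
      obtain ⟨hj1, hj2⟩ := Finset.mem_Ico.mp hj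
      rw [extz_lt _ hj2, extz_lt (a ⟨i, hi⟩) hj2]
      have hj0 : j ≠ 0 := by omega
      simp [hj0]
  have cB'lt : ∀ (u : Fin (n - d) → ℤ) (i : ℕ) (h1 : i < m),
      B'.mulVec u ⟨i, by omega⟩ = ∑ j, b₁ j * u j := by
    intro u i h1
    simp [Matrix.mulVec, dotProduct, hB', h1]
  have cB'ge : ∀ (u : Fin (n - d) → ℤ) (i : ℕ) (h1 : m ≤ i) (h2 : i < n + m - 1),
      B'.mulVec u ⟨i, h2⟩ = B.mulVec u ⟨i - m + 1, by omega⟩ := by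
    intro u i h1 h2
    simp [Matrix.mulVec, dotProduct, hB', Nat.not_lt.mpr h1]
  have cB0 : ∀ (u : Fin (n - d) → ℤ),
      B.mulVec u ⟨0, by omega⟩ = (m : ℤ) * ∑ j, b₁ j * u j := by
    intro u
    simp [Matrix.mulVec, dotProduct, hB0, Finset.mul_sum, mul_assoc]
  refine ⟨?_, ?_, ?_⟩
  · -- injectivity of B'
    intro u1 u2 hu
    apply hBinj
    funext i
    by_cases hi0 : (i : ℕ) = 0
    · have hi' : i = ⟨0, by omega⟩ := Fin.ext (by simp [hi0])
      rw [hi', cB0 u1, cB0 u2]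
      rw [← cB'lt u1 0 (by omega), ← cB'lt u2 0 (by omega), hu]
    · have h2 : (i : ℕ) + m - 1 < n + m - 1 := by have := i.isLt; omega
      have hfix : i = (⟨(i : ℕ) + m - 1 - m + 1, by omega⟩ : Fin n) :=
        Fin.ext (by simp; omega)
      rw [hfix, ← cB'ge u1 ((i : ℕ) + m - 1) (by omega) h2,
        ← cB'ge u2 ((i : ℕ) + m - 1) (by omega) h2, hu]
  · -- surjectivity of A'
    have step1 : ∀ z : Fin d → ℤ, ∃ x : Fin n → ℤ, ∀ (i : ℕ) (hi : i < d),
        (if i = 0 then extz (a ⟨i, hi⟩) 0 else (m : ℤ) * extz (a ⟨i, hi⟩) 0) * extz x 0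
          + ∑ j ∈ Finset.Ico 1 n, extz (a ⟨i, hi⟩) j * extz x j
        = if i = 0 then z ⟨i, hi⟩ else (m : ℤ) * z ⟨i, hi⟩ := by
      intro z
      obtain ⟨x₀, hx₀⟩ := hAsurj z
      refine ⟨fun j => if (j : ℕ) = 0 then x₀ j else (m : ℤ) * x₀ j, ?_⟩
      intro i hi
      have hx : ∀ j : ℕ, extz (fun j : Fin n => if (j : ℕ) = 0 then x₀ j else (m : ℤ) * x₀ j) j
          = if j = 0 then extz x₀ j else (m : ℤ) * extz x₀ j := by
        intro j
        unfold extz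
        split
        · next h => by_cases hj : j = 0 <;> simp [hj]
        · split <;> simp
      have hAx := congrFun hx₀ ⟨i, hi⟩
      rw [cA x₀ i hi] at hAx
      by_cases h0 : i = 0
      · subst h0
        rw [if_pos rfl, if_pos rfl]
        have hs : ∑ j ∈ Finset.Ico 1 n, extz (a ⟨0, hi⟩) j
              * extz (fun j : Fin n => if (j : ℕ) = 0 then x₀ j else (m : ℤ) * x₀ j) j
            = ∑ j ∈ Finset.Ico 1 n,
              (if (0:ℕ) = 0 then (m : ℤ) * extz (a ⟨0, hi⟩) j else extz (a ⟨0, hi⟩) j) * extz x₀ j := by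
          apply Finset.sum_congr rfl
          intro j hj
          obtain ⟨h1, h2⟩ := Finset.mem_Ico.mp hj
          rw [hx j, if_neg (show ¬ j = 0 from by omega), if_pos rfl]
          ring
        rw [hs, hx 0, if_pos rfl]
        exact hAx
      · rw [if_neg h0, if_neg h0]
        have hs0 : ∑ j ∈ Finset.Ico 1 n,
              (if i = 0 then (m : ℤ) * extz (a ⟨i, hi⟩) j else extz (a ⟨i, hi⟩) j) * extz x₀ j
            = ∑ j ∈ Finset.Ico 1 n, extz (a ⟨i, hi⟩) j * extz x₀ j := by
          apply Finset.sum_congr rfl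
          intro j hj
          rw [if_neg h0]
        rw [hs0] at hAx
        have hs : ∑ j ∈ Finset.Ico 1 n, extz (a ⟨i, hi⟩) j
              * extz (fun j : Fin n => if (j : ℕ) = 0 then x₀ j else (m : ℤ) * x₀ j) j
            = (m : ℤ) * ∑ j ∈ Finset.Ico 1 n, extz (a ⟨i, hi⟩) j * extz x₀ j := by
          rw [Finset.mul_sum]
          apply Finset.sum_congr rfl
          intro j hj
          obtain ⟨h1, h2⟩ := Finset.mem_Ico.mp hj
          rw [hx j, if_neg (show ¬ j = 0 from by omega)]
          ring
        rw [hs, hx 0, if_pos rfl]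
        linear_combination (m : ℤ) * hAx
    have surjC : ∀ z : Fin d → ℤ, ∃ x : Fin n → ℤ, ∀ (i : ℕ) (hi : i < d),
        (if i = 0 then extz (a ⟨i, hi⟩) 0 else (m : ℤ) * extz (a ⟨i, hi⟩) 0) * extz x 0
          + ∑ j ∈ Finset.Ico 1 n, extz (a ⟨i, hi⟩) j * extz x j = z ⟨i, hi⟩ := by
      intro z
      obtain ⟨x1, hx1⟩ := hA1surj z
      obtain ⟨x2, hx2⟩ := step1 (fun i : Fin d => if (i : ℕ) = 0
        then extz (a i) 0 * extz x1 0 + (∑ j ∈ Finset.Ico 1 n, extz (a i) j * extz x1 j) - z i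
        else extz (a i) 0 * extz x1 0)
      refine ⟨x1 - x2, ?_⟩
      intro i hi
      have e1 := congrFun hx1 ⟨i, hi⟩
      rw [cA1 x1 i hi] at e1
      have e2 := hx2 i hi
      beta_reduce at e2
      have hsub : ∀ j : ℕ, extz (x1 - x2) j = extz x1 j - extz x2 j := extz_sub x1 x2
      have hssub : ∑ j ∈ Finset.Ico 1 n, extz (a ⟨i, hi⟩) j * extz (x1 - x2) j
          = (∑ j ∈ Finset.Ico 1 n, extz (a ⟨i, hi⟩) j * extz x1 j)
            - ∑ j ∈ Finset.Ico 1 n, extz (a ⟨i, hi⟩) j * extz x2 j := by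
        rw [← Finset.sum_sub_distrib]
        apply Finset.sum_congr rfl
        intro j hj
        rw [hsub j]
        ring
      by_cases h0 : i = 0
      · subst h0
        rw [if_pos rfl]
        rw [if_pos rfl] at e1
        rw [if_pos (show ((⟨0, hi⟩ : Fin d) : ℕ) = 0 from rfl),
          if_pos (show ((⟨0, hi⟩ : Fin d) : ℕ) = 0 from rfl), if_pos rfl] at e2
        rw [hssub, hsub 0]
        linear_combination -e2
      · rw [if_neg h0]
        rw [if_neg h0] at e1
        rw [if_neg (show ¬ ((⟨i, hi⟩ : Fin d) : ℕ) = 0 from h0),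
          if_neg (show ¬ ((⟨i, hi⟩ : Fin d) : ℕ) = 0 from h0), if_neg h0] at e2
        rw [hssub, hsub 0]
        linear_combination e1 - e2
    intro y
    set s : ℕ → ℤ := fun k => ∑ l ∈ Finset.Ico k (m - 1), extz y (d + l) with hsdef
    have hsstep : ∀ k, k < m - 1 → s k = extz y (d + k) + s (k + 1) := by
      intro k hk
      simp only [hsdef]
      rw [Finset.sum_eq_sum_Ico_succ_bot (show k < m - 1 from hk)]
    obtain ⟨x, hx⟩ := surjC (fun i : Fin d => if (i : ℕ) = 0
      then y ⟨0, by omega⟩ - extz (a i) 0 * s 0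
      else y ⟨(i : ℕ), by have := i.isLt; omega⟩ - extz (a i) 0 * ∑ k ∈ Finset.range m, s k)
    have hex : ∃ v : Fin (n + m - 1) → ℤ,
        (∀ k, k < m → extz v k = x ⟨0, hn0⟩ + s k)
          ∧ ∀ j, 1 ≤ j → ∀ hj : j < n, extz v (j + m - 1) = extz x j := by
      refine ⟨fun j => if h : (j : ℕ) < m then x ⟨0, hn0⟩ + s (j : ℕ)
        else x ⟨(j : ℕ) - m + 1, by have := j.isLt; omega⟩, ?_, ?_⟩
      · intro k hk
        rw [extz_lt _ (show k < n + m - 1 from by omega)]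
        exact dif_pos hk
      · intro j h1 hj
        conv_lhs => rw [extz_lt _ (show j + m - 1 < n + m - 1 from by omega)]
        conv_rhs => rw [extz_lt x hj]
        rw [dif_neg (show ¬ (j + m - 1 < m) from by omega)]
        exact congrArg x (Fin.ext (by simp; omega))
    obtain ⟨v, hvlt, hvge⟩ := hex
    refine ⟨v, ?_⟩
    funext i
    obtain ⟨iv, hiv⟩ := i
    by_cases hid : iv < d
    · rw [cA' v iv hid]
      have hxi := hx iv hid
      beta_reduce at hxi
      have hsum2 : ∑ j ∈ Finset.Ico 1 n, extz (a ⟨iv, hid⟩) j * extz v (j + m - 1)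
          = ∑ j ∈ Finset.Ico 1 n, extz (a ⟨iv, hid⟩) j * extz x j := by
        apply Finset.sum_congr rfl
        intro j hj
        obtain ⟨h1, h2⟩ := Finset.mem_Ico.mp hj
        rw [hvge j h1 h2]
      have h2 : extz x 0 = x ⟨0, hn0⟩ := extz_lt x hn0
      by_cases h0 : iv = 0
      · subst h0
        rw [if_pos rfl]
        rw [if_pos rfl,
          if_pos (show ((⟨0, hid⟩ : Fin d) : ℕ) = 0 from rfl)] at hxi
        rw [hvlt 0 hmpos, hsum2]
        rw [h2] at hxi
        linear_combination hxi
      · rw [if_neg h0]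
        rw [if_neg h0,
          if_neg (show ¬ ((⟨iv, hid⟩ : Fin d) : ℕ) = 0 from h0)] at hxi
        have hsum1 : ∑ k ∈ Finset.range m, extz v k
            = (m : ℤ) * x ⟨0, hn0⟩ + ∑ k ∈ Finset.range m, s k := by
          have h' : ∑ k ∈ Finset.range m, extz v k
              = ∑ k ∈ Finset.range m, (x ⟨0, hn0⟩ + s k) :=
            Finset.sum_congr rfl (fun k hk => hvlt k (Finset.mem_range.mp hk))
          conv_lhs => rw [h']
          rw [Finset.sum_add_distrib, Finset.sum_const, Finset.card_range]
          simp
        rw [hsum1, hsum2]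
        rw [h2] at hxi
        linear_combination hxi
    · have hge1 : d ≤ iv := by clear hx hvlt hvge; omega
      have hge2 : iv - d < m := by clear hx hvlt hvge; omega
      have hge3 : iv - d + 1 < m := by clear hx hvlt hvge; omega
      have hge4 : iv - d < m - 1 := by clear hx hvlt hvge; omega
      have hge5 : d + (iv - d) = iv := by clear hx hvlt hvge; omega
      rw [cA'ge v iv hge1 hiv]
      rw [hvlt (iv - d) hge2, hvlt (iv - d + 1) hge3]
      rw [hsstep (iv - d) hge4]
      rw [hge5]
      rw [extz_lt y hiv]
      ring
  · -- exactness
    intro v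
    constructor
    · intro hv
      have hstep : ∀ k, k < m - 1 → extz v k = extz v (k + 1) := by
        intro k hk
        have h2 : d + k < d + m - 1 := by omega
        have hrow := congrFun hv ⟨d + k, h2⟩
        rw [cA'ge v (d + k) (by omega) h2] at hrow
        rw [Pi.zero_apply] at hrow
        rw [show d + k - d = k from by omega] at hrow
        linarith [hrow]
      have hconst : ∀ k, k < m → extz v k = extz v 0 := by
        intro k
        induction k with
        | zero => intro _; rfl
        | succ k ih =>
          intro hk
          rw [← hstep k (by omega)]
          exact ih (by omega)
      set t := extz v 0 with ht
      set w : Fin n → ℤ := fun j => if (j : ℕ) = 0 then (m : ℤ) * t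
        else v ⟨(j : ℕ) + m - 1, by have := j.isLt; omega⟩ with hw
      have hw0 : extz w 0 = (m : ℤ) * t := by
        rw [extz_lt w (show 0 < n by omega)]
        simp [hw]
      have hwj : ∀ j, 1 ≤ j → ∀ hj : j < n, extz w j = extz v (j + m - 1) := by
        intro j h1 hj
        rw [extz_lt w hj, extz_lt v (show j + m - 1 < n + m - 1 by omega)]
        simp only [hw]
        rw [if_neg (show ¬ (j = 0) from by omega)]
      have hsum : ∑ k ∈ Finset.range m, extz v k = (m : ℤ) * t := by
        rw [Finset.sum_congr rfl (fun k hk => hconst k (Finset.mem_range.mp hk))]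
        simp [mul_comm]
      have hAw : A.mulVec w = 0 := by
        funext i
        obtain ⟨iv, hiv⟩ := i
        rw [cA w iv hiv, Pi.zero_apply]
        by_cases h0 : iv = 0
        · subst h0
          have hv0 := congrFun hv ⟨0, by omega⟩
          rw [cA' v 0 hiv, Pi.zero_apply] at hv0
          rw [if_pos rfl] at hv0
          rw [hw0]
          have hs : ∑ j ∈ Finset.Ico 1 n,
                (if (0:ℕ) = 0 then (m : ℤ) * extz (a ⟨0, hiv⟩) j else extz (a ⟨0, hiv⟩) j) * extz w j
              = (m : ℤ) * ∑ j ∈ Finset.Ico 1 n, extz (a ⟨0, hiv⟩) j * extz v (j + m - 1) := by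
            rw [Finset.mul_sum]
            apply Finset.sum_congr rfl
            intro j hj
            obtain ⟨h1, h2⟩ := Finset.mem_Ico.mp hj
            rw [if_pos rfl, hwj j h1 h2]
            ring
          rw [hs]
          linear_combination (m : ℤ) * hv0
        · have hv0 := congrFun hv ⟨iv, by omega⟩
          rw [cA' v iv hiv, Pi.zero_apply] at hv0
          rw [if_neg h0] at hv0
          rw [hw0]
          rw [hsum] at hv0
          have hs : ∑ j ∈ Finset.Ico 1 n,
                (if iv = 0 then (m : ℤ) * extz (a ⟨iv, hiv⟩) j else extz (a ⟨iv, hiv⟩) j) * extz w j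
              = ∑ j ∈ Finset.Ico 1 n, extz (a ⟨iv, hiv⟩) j * extz v (j + m - 1) := by
            apply Finset.sum_congr rfl
            intro j hj
            obtain ⟨h1, h2⟩ := Finset.mem_Ico.mp hj
            rw [if_neg h0, hwj j h1 h2]
          rw [hs]
          linear_combination hv0
      obtain ⟨u, hBu⟩ := (hexact w).mp hAw
      refine ⟨u, ?_⟩
      funext i
      obtain ⟨iv, hiv⟩ := i
      by_cases him : iv < m
      · rw [cB'lt u iv him]
        have h1 : (m : ℤ) * (∑ j, b₁ j * u j) = (m : ℤ) * t := by
          rw [← cB0 u, hBu]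
          simp [hw]
        rw [mul_left_cancel₀ hm0 h1]
        have h2 := hconst iv him
        rw [extz_lt v (show iv < n + m - 1 from hiv)] at h2
        rw [← h2]
      · push_neg at him
        rw [cB'ge u iv him hiv, hBu]
        simp only [hw]
        rw [if_neg (show ¬ (iv - m + 1 = 0) from by omega)]
        exact congrArg v (Fin.ext (by simp; omega))
    · rintro ⟨u, rfl⟩
      have hABu : A.mulVec (B.mulVec u) = 0 := (hexact (B.mulVec u)).mpr ⟨u, rfl⟩
      set β := ∑ j, b₁ j * u j with hβ
      have hextlt : ∀ k, k < m → extz (B'.mulVec u) k = β := by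
        intro k hk
        rw [extz_lt _ (show k < n + m - 1 by omega)]
        exact cB'lt u k hk
      have hextge : ∀ j, 1 ≤ j → ∀ hj : j < n,
          extz (B'.mulVec u) (j + m - 1) = extz (B.mulVec u) j := by
        intro j h1 hj
        rw [extz_lt _ (show j + m - 1 < n + m - 1 by omega), extz_lt _ hj]
        rw [cB'ge u (j + m - 1) (by omega) (by omega)]
        exact congrArg _ (Fin.ext (by simp; omega))
      have hBu0 : extz (B.mulVec u) 0 = (m : ℤ) * β := by
        rw [extz_lt _ (show 0 < n by omega)]
        exact cB0 u
      funext i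
      obtain ⟨iv, hiv⟩ := i
      rw [Pi.zero_apply]
      by_cases hid : iv < d
      · rw [cA' (B'.mulVec u) iv hid]
        by_cases h0 : iv = 0
        · subst h0
          have heq := congrFun hABu ⟨0, hid⟩
          rw [cA (B.mulVec u) 0 hid, Pi.zero_apply, hBu0] at heq
          have hs : ∑ j ∈ Finset.Ico 1 n,
                (if (0:ℕ) = 0 then (m : ℤ) * extz (a ⟨0, hid⟩) j else extz (a ⟨0, hid⟩) j) * extz (B.mulVec u) j
              = (m : ℤ) * ∑ j ∈ Finset.Ico 1 n, extz (a ⟨0, hid⟩) j * extz (B.mulVec u) j := by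
            rw [Finset.mul_sum]
            apply Finset.sum_congr rfl
            intro j hj
            rw [if_pos rfl]
            ring
          rw [hs] at heq
          rw [if_pos rfl, hextlt 0 (by omega)]
          have hs2 : ∑ j ∈ Finset.Ico 1 n, extz (a ⟨0, hid⟩) j * extz (B'.mulVec u) (j + m - 1)
              = ∑ j ∈ Finset.Ico 1 n, extz (a ⟨0, hid⟩) j * extz (B.mulVec u) j := by
            apply Finset.sum_congr rfl
            intro j hj
            obtain ⟨h1, h2⟩ := Finset.mem_Ico.mp hj
            rw [hextge j h1 h2]
          rw [hs2]
          apply mul_left_cancel₀ hm0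
          rw [mul_zero]
          linear_combination heq
        · have heq := congrFun hABu ⟨iv, hid⟩
          rw [cA (B.mulVec u) iv hid, Pi.zero_apply, hBu0] at heq
          have hs0 : ∑ j ∈ Finset.Ico 1 n,
                (if iv = 0 then (m : ℤ) * extz (a ⟨iv, hid⟩) j else extz (a ⟨iv, hid⟩) j) * extz (B.mulVec u) j
              = ∑ j ∈ Finset.Ico 1 n, extz (a ⟨iv, hid⟩) j * extz (B.mulVec u) j := by
            apply Finset.sum_congr rfl
            intro j hj
            rw [if_neg h0]
          rw [hs0] at heq
          rw [if_neg h0]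
          have hs : ∑ k ∈ Finset.range m, extz (B'.mulVec u) k = (m : ℤ) * β := by
            rw [Finset.sum_congr rfl (fun k hk => hextlt k (Finset.mem_range.mp hk))]
            simp [mul_comm]
          rw [hs]
          have hs2 : ∑ j ∈ Finset.Ico 1 n, extz (a ⟨iv, hid⟩) j * extz (B'.mulVec u) (j + m - 1)
              = ∑ j ∈ Finset.Ico 1 n, extz (a ⟨iv, hid⟩) j * extz (B.mulVec u) j := by
            apply Finset.sum_congr rfl
            intro j hj
            obtain ⟨h1, h2⟩ := Finset.mem_Ico.mp hj
            rw [hextge j h1 h2]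
          rw [hs2]
          linear_combination heq
      · rw [cA'ge (B'.mulVec u) iv (by omega) hiv]
        rw [hextlt (iv - d) (by omega), hextlt (iv - d + 1) (by omega)]
        ring
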